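/- Let K be a field and q(x_1,...,x_n) a quadratic form over K, and L a finite field extension of K of odd degree. If q has a nontrivial zero over L, then q has a nontrivial zero over K. -/

import Mathlib

open Polynomial

lemma sp_coeff_prod {R : Type*} [CommSemiring R] {ι : Type*} (s : Finset ι)
    (f : ι → R[X]) (d : ι → ℕ) (h : ∀ i ∈ s, (f i).natDegree ≤ d i) :
    (∏ i ∈ s, f i).coeff (∑ i ∈ s, d i) = ∏ i ∈ s, (f i).coeff (d i) := by
  induction s using Finset.cons_induction with
  | empty => simp
  | cons a s ha ih =>
    rw [Finset.prod_cons, Finset.sum_cons, Polynomial.coeff_mul_add_eq_of_natDegree_le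
      (h a (Finset.mem_cons_self a s))
      ((Polynomial.natDegree_prod_le s f).trans (Finset.sum_le_sum
        (fun i hi => h i (Finset.mem_cons_of_mem hi)))),
      ih (fun i hi => h i (Finset.mem_cons_of_mem hi)), Finset.prod_cons]

lemma sp_eval_map {R S σ : Type*} [CommSemiring R] [CommSemiring S] (φ : R →+* S)
    (v : σ → R) (p : MvPolynomial σ R) :
    MvPolynomial.eval (fun i => φ (v i)) (p.map φ) = φ (MvPolynomial.eval v p) := by
  rw [MvPolynomial.eval_map]
  have := MvPolynomial.eval₂_comp_left φ (RingHom.id R) v p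
  simp only [RingHom.comp_id] at this
  rw [show (fun i => φ (v i)) = ⇑φ ∘ v from rfl, ← this]
  rfl

lemma sp_support_sum {R : Type*} [CommSemiring R] {n : ℕ}
    {q : MvPolynomial (Fin n) R} (hq : q.IsHomogeneous 2)
    {d : Fin n →₀ ℕ} (hd : d ∈ q.support) : ∑ i ∈ d.support, d i = 2 := by
  have := hq (MvPolynomial.mem_support_iff.mp hd)
  rw [Finsupp.weight_apply, Finsupp.sum] at this
  simpa using this


section helpers
variable {K : Type*} [Field K] {n : ℕ}

lemma sp_coeff_eval {q : MvPolynomial (Fin n) K} (hq : q.IsHomogeneous 2)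
    (g : Fin n → K[X]) (e : ℕ) (hg : ∀ i, (g i).natDegree ≤ e) :
    (MvPolynomial.eval g (q.map Polynomial.C)).coeff (2 * e)
      = MvPolynomial.eval (fun i => (g i).coeff e) q := by
  rw [MvPolynomial.eval_map, MvPolynomial.eval₂_eq, MvPolynomial.eval_eq,
    Polynomial.finset_sum_coeff]
  refine Finset.sum_congr rfl (fun d hd => ?_)
  rw [Polynomial.coeff_C_mul]
  congr 1
  have hsum : 2 * e = ∑ i ∈ d.support, d i * e := by
    rw [← Finset.sum_mul, sp_support_sum hq hd]
  rw [hsum, sp_coeff_prod d.support (fun i => g i ^ d i) (fun i => d i * e)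
    (fun i _ => (Polynomial.natDegree_pow_le).trans
      (Nat.mul_le_mul_left (d i) (hg i)))]
  exact Finset.prod_congr rfl (fun i _ => Polynomial.coeff_pow_of_natDegree_le (hg i))

lemma sp_natDegree_eval_le {q : MvPolynomial (Fin n) K} (hq : q.IsHomogeneous 2)
    (g : Fin n → K[X]) (e : ℕ) (hg : ∀ i, (g i).natDegree ≤ e) :
    (MvPolynomial.eval g (q.map Polynomial.C)).natDegree ≤ 2 * e := by
  rw [MvPolynomial.eval_map, MvPolynomial.eval₂_eq]
  refine Polynomial.natDegree_sum_le_of_forall_le _ _ (fun d hd => ?_)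
  refine (Polynomial.natDegree_mul_le).trans ?_
  rw [Polynomial.natDegree_C, zero_add]
  refine (Polynomial.natDegree_prod_le _ _).trans ?_
  have hsum : 2 * e = ∑ i ∈ d.support, d i * e := by
    rw [← Finset.sum_mul, sp_support_sum hq hd]
  rw [hsum]
  exact Finset.sum_le_sum (fun i _ => (Polynomial.natDegree_pow_le).trans
      (Nat.mul_le_mul_left (d i) (hg i)))

lemma sp_eval_smul {R : Type*} [CommSemiring R] {m : ℕ} {q : MvPolynomial (Fin m) R}
    (hq : q.IsHomogeneous 2) (c : R) (v : Fin m → R) :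
    MvPolynomial.eval (fun i => c * v i) q = c ^ 2 * MvPolynomial.eval v q := by
  rw [MvPolynomial.eval_eq, MvPolynomial.eval_eq, Finset.mul_sum]
  refine Finset.sum_congr rfl (fun d hd => ?_)
  have : ∏ i ∈ d.support, (c * v i) ^ d i
      = (∏ i ∈ d.support, c ^ d i) * ∏ i ∈ d.support, v i ^ d i := by
    rw [← Finset.prod_mul_distrib]
    exact Finset.prod_congr rfl (fun i _ => mul_pow _ _ _)
  rw [this, Finset.prod_pow_eq_pow_sum, sp_support_sum hq hd]
  ring

lemma sp_odd_factor : ∀ N : ℕ, ∀ h : K[X], h.natDegree ≤ N → h ≠ 0 → Odd h.natDegree →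
    ∃ p : K[X], Irreducible p ∧ p ∣ h ∧ Odd p.natDegree := by
  intro N
  induction N with
  | zero =>
    intro h hN _ hodd
    obtain ⟨k, hk⟩ := hodd
    omega
  | succ N IH =>
    intro h hN h0 hodd
    have hnu : ¬ IsUnit h := by
      intro hu
      rw [Polynomial.isUnit_iff] at hu
      obtain ⟨r, hr, rfl⟩ := hu
      rw [Polynomial.natDegree_C] at hodd
      exact (Nat.not_odd_zero) hodd
    obtain ⟨p, hpirr, hpdvd⟩ := WfDvdMonoid.exists_irreducible_factor hnu h0
    by_cases hodd' : Odd p.natDegree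
    · exact ⟨p, hpirr, hpdvd, hodd'⟩
    · obtain ⟨h₂, rfl⟩ := hpdvd
      have hp0 : p ≠ 0 := hpirr.ne_zero
      have h₂0 : h₂ ≠ 0 := fun h' => h0 (by rw [h', mul_zero])
      have hnd : (p * h₂).natDegree = p.natDegree + h₂.natDegree :=
        Polynomial.natDegree_mul hp0 h₂0
      have hp1 : 0 < p.natDegree := hpirr.natDegree_pos
      have h₂odd : Odd h₂.natDegree := by
        rcases Nat.even_or_odd h₂.natDegree with he | ho
        · exfalso
          apply hodd'
          rw [hnd] at hodd
          rcases Nat.even_or_odd p.natDegree with he2 | ho2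
          · exfalso
            obtain ⟨a, hap⟩ := he2; obtain ⟨b, hbp⟩ := he; obtain ⟨k, hk⟩ := hodd; omega
          · exact ho2
        · exact ho
      obtain ⟨r, hr1, hr2, hr3⟩ := IH h₂ (by omega) h₂0 h₂odd
      exact ⟨r, hr1, hr2.trans (dvd_mul_left _ _), hr3⟩

end helpers

open MvPolynomial in
lemma sp_core {K : Type*} [Field K] {n : ℕ} (q : MvPolynomial (Fin n) K)
    (hq : q.IsHomogeneous 2) :
    ∀ e : ℕ, ∀ f : K[X], Irreducible f → Odd f.natDegree →
    ∀ g : Fin n → K[X], g ≠ 0 → (∀ i, (g i).natDegree ≤ e) →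
    (∀ i, (g i).natDegree < f.natDegree) →
    f ∣ MvPolynomial.eval g (q.map Polynomial.C) →
    (∃ w : Fin n → K, w ≠ 0 ∧ eval w q = 0) ∨
    (∃ p : K[X], Irreducible p ∧ Odd p.natDegree ∧ p.natDegree < f.natDegree ∧
      ∃ w : Fin n → AdjoinRoot p, w ≠ 0 ∧
        eval w (q.map (algebraMap K (AdjoinRoot p))) = 0) := by
  intro e
  induction e using Nat.strong_induction_on with
  | _ e IH =>
  intro f hfirr hfodd g hg0 hge hgf hfP
  -- the true max degree
  set e' : ℕ := Finset.univ.sup (fun i => (g i).natDegree) with he'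
  obtain ⟨j, hj⟩ : ∃ j, g j ≠ 0 := by
    by_contra hcon
    push_neg at hcon
    exact hg0 (funext hcon)
  have hle : ∀ i, (g i).natDegree ≤ e' := fun i => Finset.le_sup (f := fun i => (g i).natDegree) (Finset.mem_univ i)
  have he'e : e' ≤ e := Finset.sup_le (fun i _ => hge i)
  obtain ⟨i₀, hi₀ne, hi₀deg⟩ : ∃ i₀, g i₀ ≠ 0 ∧ (g i₀).natDegree = e' := by
    rcases Nat.eq_zero_or_pos e' with h0 | hpos
    · exact ⟨j, hj, le_antisymm (h0 ▸ hle j) (h0 ▸ Nat.zero_le _)⟩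
    · obtain ⟨i, _, hi⟩ := Finset.exists_mem_eq_sup Finset.univ
        ⟨j, Finset.mem_univ j⟩ (fun i => (g i).natDegree)
      refine ⟨i, ?_, hi.symm⟩
      intro hzero
      rw [hzero] at hi
      simp only [Polynomial.natDegree_zero] at hi
      omega
  set c : Fin n → K := fun i => (g i).coeff e' with hc
  have hc0 : c ≠ 0 := by
    intro hcon
    have : (g i₀).coeff e' = 0 := congrFun hcon i₀
    rw [← hi₀deg] at this
    exact hi₀ne (Polynomial.leadingCoeff_eq_zero.mp this)
  by_cases hcq : eval c q = 0
  · exact Or.inl ⟨c, hc0, hcq⟩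
  -- main case
  set P : K[X] := MvPolynomial.eval g (q.map Polynomial.C) with hP
  have hcoeff : P.coeff (2 * e') = eval c q := sp_coeff_eval hq g e' hle
  have hP0 : P ≠ 0 := fun h => hcq (by rw [← hcoeff, h, Polynomial.coeff_zero])
  have hdegle : P.natDegree ≤ 2 * e' := sp_natDegree_eval_le hq g e' hle
  have hdegge : 2 * e' ≤ P.natDegree :=
    Polynomial.le_natDegree_of_ne_zero (hcoeff ▸ hcq)
  have hPdeg : P.natDegree = 2 * e' := le_antisymm hdegle hdegge
  obtain ⟨h, hPh⟩ := hfP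
  have hf0 : f ≠ 0 := hfirr.ne_zero
  have hh0 : h ≠ 0 := by
    intro hcon
    rw [hcon, mul_zero] at hPh
    exact hP0 hPh
  have hnd : P.natDegree = f.natDegree + h.natDegree := by
    rw [hPh, Polynomial.natDegree_mul hf0 hh0]
  have he'f : e' < f.natDegree := hi₀deg ▸ hgf i₀
  have hfle : f.natDegree ≤ 2 * e' := by omega
  have hhodd : Odd h.natDegree := by
    have heven : Even (2 * e') := even_two_mul e'
    have := Nat.Even.sub_odd hfle heven hfodd
    have hh : h.natDegree = 2 * e' - f.natDegree := by omega
    rwa [hh]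
  obtain ⟨p, hpirr, hpdvd, hpodd⟩ := sp_odd_factor h.natDegree h le_rfl hh0 hhodd
  have hplt : p.natDegree < f.natDegree := by
    have h1 : p.natDegree ≤ h.natDegree := Polynomial.natDegree_le_of_dvd hpdvd hh0
    omega
  by_cases hdvd : ∀ i, p ∣ g i
  · -- divide all gᵢ by p and recurse on smaller degree bound
    set g' : Fin n → K[X] := fun i => Classical.choose (hdvd i) with hg'
    have hgg' : ∀ i, g i = p * g' i := fun i => Classical.choose_spec (hdvd i)
    have hp0 : p ≠ 0 := hpirr.ne_zero
    have hppos : 0 < p.natDegree := hpirr.natDegree_pos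
    have hfpos : 0 < f.natDegree := hfirr.natDegree_pos
    have hepos : 0 < e := by omega
    have hg'0 : g' ≠ 0 := by
      intro hcon
      apply hi₀ne
      rw [hgg' i₀, congrFun hcon i₀, Pi.zero_apply, mul_zero]
    have hg'le : ∀ i, (g' i).natDegree ≤ e - 1 := by
      intro i
      rcases eq_or_ne (g' i) 0 with h0 | h0
      · rw [h0, Polynomial.natDegree_zero]; omega
      · have := hge i
        rw [hgg' i, Polynomial.natDegree_mul hp0 h0] at this
        omega
    have hg'f : ∀ i, (g' i).natDegree < f.natDegree := by
      intro i
      rcases eq_or_ne (g' i) 0 with h0 | h0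
      · rw [h0, Polynomial.natDegree_zero]; omega
      · have := hgf i
        rw [hgg' i, Polynomial.natDegree_mul hp0 h0] at this
        omega
    have hfP' : f ∣ MvPolynomial.eval g' (q.map Polynomial.C) := by
      have hsc : P = p ^ 2 * MvPolynomial.eval g' (q.map Polynomial.C) := by
        rw [hP]
        have : g = fun i => p * g' i := funext hgg'
        rw [this]
        exact sp_eval_smul (hq.map _) p g'
      have hfprime : Prime f := hfirr.prime
      have : f ∣ p ^ 2 * MvPolynomial.eval g' (q.map Polynomial.C) := hsc ▸ ⟨h, hPh⟩
      rcases hfprime.dvd_mul.mp this with hl | hr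
      · exfalso
        have : f ∣ p := hfprime.dvd_of_dvd_pow hl
        have := Polynomial.natDegree_le_of_dvd this hp0
        omega
      · exact hr
    exact IH (e - 1) (by omega) f hfirr hfodd g' hg'0 hg'le hg'f hfP'
  · -- found our zero over AdjoinRoot p
    push_neg at hdvd
    obtain ⟨j₁, hj₁⟩ := hdvd
    refine Or.inr ⟨p, hpirr, hpodd, hplt, fun i => AdjoinRoot.mk p (g i), ?_, ?_⟩
    · intro hcon
      exact hj₁ (AdjoinRoot.mk_eq_zero.mp (congrFun hcon j₁))
    · have hmap : q.map (algebraMap K (AdjoinRoot p))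
          = (q.map Polynomial.C).map (AdjoinRoot.mk p) := by
        rw [MvPolynomial.map_map]
        rfl
      rw [hmap, sp_eval_map (AdjoinRoot.mk p) g (q.map Polynomial.C)]
      rw [AdjoinRoot.mk_eq_zero]
      exact hpdvd.trans ⟨f, by rw [← hP, hPh]; ring⟩

universe u in
open MvPolynomial IntermediateField in
lemma sp_aux : ∀ (d : ℕ) (K L : Type u) [Field K] [Field L] [Algebra K L]
    [FiniteDimensional K L], Module.finrank K L = d → Odd d →
    ∀ (n : ℕ) (q : MvPolynomial (Fin n) K), q.IsHomogeneous 2 →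
    (∃ v : Fin n → L, v ≠ 0 ∧ eval v (q.map (algebraMap K L)) = 0) →
    ∃ w : Fin n → K, w ≠ 0 ∧ eval w q = 0 := by
  intro d
  induction d using Nat.strong_induction_on with
  | _ d IH =>
  intro K L _ _ _ _ hd hodd n q hq hex
  obtain ⟨v, hv0, hv⟩ := hex
  have hd0 : d % 2 = 1 := Nat.odd_iff.mp hodd
  by_cases hcase : d = 1
  · -- base case : degree 1, algebraMap is surjective
    have hbt : (⊥ : Subalgebra K L) = ⊤ :=
      Subalgebra.bot_eq_top_iff_finrank_eq_one.mpr (hd.trans hcase)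
    have hrange : ∀ i, ∃ k, algebraMap K L k = v i := by
      intro i
      have h1 : v i ∈ (⊥ : Subalgebra K L) := by rw [hbt]; trivial
      rwa [Algebra.mem_bot, Set.mem_range] at h1
    choose w hw using hrange
    refine ⟨w, ?_, ?_⟩
    · intro hcon
      apply hv0
      funext i
      rw [← hw i, congrFun hcon i, Pi.zero_apply, map_zero, Pi.zero_apply]
    · apply (algebraMap K L).injective
      have h1 := sp_eval_map (algebraMap K L) w q
      rw [show (fun i => algebraMap K L (w i)) = v from funext hw] at h1
      rw [map_zero, ← h1, hv]
  · -- inductive step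
    have hne : ∃ a : L, a ∉ Set.range (algebraMap K L) := by
      by_contra hcon
      push_neg at hcon
      have hbt : (⊥ : Subalgebra K L) = ⊤ := by
        ext x
        simp only [Algebra.mem_bot, Algebra.mem_top, iff_true]
        exact hcon x
      rw [Subalgebra.bot_eq_top_iff_finrank_eq_one, hd] at hbt
      exact hcase hbt
    obtain ⟨a, ha⟩ := hne
    have hint : IsIntegral K a := IsIntegral.of_finite K a
    have hrs : Module.finrank K K⟮a⟯ * Module.finrank (K⟮a⟯) L = d := by
      rw [Module.finrank_mul_finrank, hd]
    have hodd' : Odd (Module.finrank K K⟮a⟯ * Module.finrank (K⟮a⟯) L) := hrs ▸ hodd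
    obtain ⟨hr_odd, hs_odd⟩ := Nat.odd_mul.mp hodd'
    set r := Module.finrank K K⟮a⟯ with hrdef
    set s := Module.finrank (K⟮a⟯) L with hsdef
    have hr1 : r ≠ 1 := by
      intro h1'
      have hbot : K⟮a⟯ = ⊥ := IntermediateField.finrank_eq_one_iff.mp h1'
      apply ha
      have hmem : a ∈ K⟮a⟯ := IntermediateField.mem_adjoin_simple_self K a
      rw [hbot, IntermediateField.mem_bot] at hmem
      exact hmem
    have hr2 : 2 ≤ r := by
      have := Nat.odd_iff.mp hr_odd
      omega
    have hs1 : 1 ≤ s := by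
      have := Nat.odd_iff.mp hs_odd
      omega
    have hs_lt : s < d := by
      calc s = 1 * s := (one_mul s).symm
      _ < r * s := (Nat.mul_lt_mul_right (by omega : 0 < s)).mpr (by omega : 1 < r)
      _ = d := hrs
    have hrd : r ≤ d := by
      calc r = r * 1 := (mul_one r).symm
      _ ≤ r * s := Nat.mul_le_mul_left r hs1
      _ = d := hrs
    -- zero over L of the mapped polynomial, base field K⟮a⟯
    have hvM : eval v ((q.map (algebraMap K K⟮a⟯)).map (algebraMap (K⟮a⟯) L)) = 0 := by
      rw [MvPolynomial.map_map, ← IsScalarTower.algebraMap_eq]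
      exact hv
    obtain ⟨v', hv'0, hv'z⟩ := IH s hs_lt K⟮a⟯ L rfl hs_odd n
      (q.map (algebraMap K K⟮a⟯)) (hq.map _) ⟨v, hv0, hvM⟩
    -- now use the power basis of K⟮a⟯
    set pb := IntermediateField.adjoin.powerBasis hint with hpb
    have hpbdim : pb.dim = r := by rw [← PowerBasis.finrank pb]
    choose g hgdeg hgval using fun i => pb.exists_eq_aeval (v' i)
    set f := minpoly K a with hf
    have hfirr : Irreducible f := minpoly.irreducible hint
    have hfr : f.natDegree = r := (IntermediateField.adjoin.finrank hint).symm
    have hg0 : g ≠ 0 := by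
      intro hcon
      apply hv'0
      funext i
      rw [hgval i, congrFun hcon i, Pi.zero_apply, map_zero, Pi.zero_apply]
    set P := MvPolynomial.eval g (q.map Polynomial.C) with hPdef
    have hPz : Polynomial.aeval pb.gen P = 0 := by
      have h1 := sp_eval_map ((Polynomial.aeval pb.gen : Polynomial K →ₐ[K] K⟮a⟯) :
        Polynomial K →+* K⟮a⟯) g (q.map Polynomial.C)
      rw [MvPolynomial.map_map] at h1
      have hcomp : (((Polynomial.aeval pb.gen : Polynomial K →ₐ[K] K⟮a⟯) :
          Polynomial K →+* K⟮a⟯)).comp Polynomial.C = algebraMap K K⟮a⟯ := by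
        ext k
        simp
      rw [hcomp] at h1
      have hfun : (fun i => ((Polynomial.aeval pb.gen : Polynomial K →ₐ[K] K⟮a⟯) :
          Polynomial K →+* K⟮a⟯) (g i)) = v' :=
        funext fun i => (hgval i).symm
      rw [hfun, hv'z] at h1
      exact h1.symm
    have hfdvd : f ∣ P := by
      have h2 := minpoly.dvd K pb.gen hPz
      rwa [IntermediateField.adjoin.powerBasis_gen, IntermediateField.minpoly_gen] at h2
    have hcore := sp_core q hq (r - 1) f hfirr (by rw [hfr]; exact hr_odd) g hg0
      (fun i => by have := hgdeg i; rw [hpbdim] at this; omega)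
      (fun i => by have := hgdeg i; rw [hpbdim] at this; omega)
      hfdvd
    rcases hcore with hdone | ⟨p, hpirr, hpodd, hplt, w, hw0, hwz⟩
    · exact hdone
    · haveI : Fact (Irreducible p) := ⟨hpirr⟩
      set pb2 : PowerBasis K (AdjoinRoot p) := AdjoinRoot.powerBasis hpirr.ne_zero with hpb2
      haveI : FiniteDimensional K (AdjoinRoot p) := pb2.finite
      have hfr2 : Module.finrank K (AdjoinRoot p) = p.natDegree := by
        rw [pb2.finrank, hpb2, AdjoinRoot.powerBasis_dim]
      have hlt : p.natDegree < d := by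
        rw [hfr] at hplt
        omega
      exact IH p.natDegree hlt K (AdjoinRoot p) hfr2 hpodd n q hq ⟨w, hw0, hwz⟩

open MvPolynomial in
theorem stmt_8 (K L : Type*) [Field K] [Field L] [Algebra K L]
    [FiniteDimensional K L] (hodd : Odd (Module.finrank K L))
    (n : ℕ) (q : MvPolynomial (Fin n) K) (hq : q.IsHomogeneous 2)
    (hL : ∃ v : Fin n → L, v ≠ 0 ∧ eval v (q.map (algebraMap K L)) = 0) :
    ∃ w : Fin n → K, w ≠ 0 ∧ eval w q = 0 := by
  obtain ⟨v, hv0, hv⟩ := hL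
  set d := Module.finrank K L with hd
  haveI hsmall : Small.{_, _} L :=
    ⟨⟨Fin d → K, ⟨(Module.finBasis K L).equivFun.toEquiv⟩⟩⟩
  let ε := Shrink.algEquiv K L
  haveI : FiniteDimensional K (Shrink L) := Module.Finite.equiv ε.symm.toLinearEquiv
  have hfr : Module.finrank K (Shrink L) = d := by
    rw [ε.toLinearEquiv.finrank_eq]
  have hcomp : (ε.symm : L →+* Shrink L).comp (algebraMap K L)
      = algebraMap K (Shrink L) :=
    RingHom.ext fun k => ε.symm.commutes k
  refine sp_aux d K (Shrink L) hfr hodd n q hq ⟨fun i => ε.symm (v i), ?_, ?_⟩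
  · intro hcon
    apply hv0
    funext i
    have h1 := congrFun hcon i
    rw [Pi.zero_apply] at h1
    have h2 : ε (ε.symm (v i)) = ε 0 := by rw [h1]
    rw [AlgEquiv.apply_symm_apply, map_zero] at h2
    exact h2.trans (Pi.zero_apply (M := fun _ => L) i).symm
  · have h1 := sp_eval_map (ε.symm : L →+* Shrink L) v (q.map (algebraMap K L))
    rw [MvPolynomial.map_map, hcomp] at h1
    exact h1.trans (by rw [hv, map_zero])
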